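/- Let Δ = diag(δ₁,…,δ_u) be a u×u real diagonal matrix with δ₁ ≥ … ≥ δ_u ≥ 0, and let Ω be a v×v Hermitian matrix (v ≥ u) with eigenvalues ω₁ ≥ … ≥ ω_v. Then for every matrix Θ ∈ ℂ^{v×u} with Θᴴ Θ = I_u, one has tr(Δ Θᴴ Ω Θ) ≥ Σ_{i=1}^{u} δ_i ω_{v-i+1}. -/

import Mathlib

open Matrix Finset


lemma keysum {v : ℕ} (m : ℕ) (hm : 1 ≤ m) (hmv : m ≤ v) (ω : Fin v → ℝ) (hω : Antitone ω)
    (c : Fin v → ℝ) (hc0 : ∀ j, 0 ≤ c j) (hc1 : ∀ j, c j ≤ 1) (hcs : ∑ j, c j = m) :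
    ∑ j ∈ Finset.univ.filter (fun j : Fin v => v - m ≤ j.1), ω j ≤ ∑ j, ω j * c j := by
  have hv : 0 < v := lt_of_le_of_lt (Nat.zero_le _) (lt_of_lt_of_le hm hmv)
  have hvm : v - m < v := by omega
  set t : ℝ := ω ⟨v - m, hvm⟩ with ht
  have hfilt : Finset.univ.filter (fun j : Fin v => v - m ≤ j.1)
      = Finset.Ici (⟨v - m, hvm⟩ : Fin v) := by
    ext j; simp [Fin.le_def]
  have hcard : (Finset.univ.filter (fun j : Fin v => v - m ≤ j.1)).card = m := by
    rw [hfilt, Fin.card_Ici]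
    show v - (v - m) = m
    omega
  have hpt : ∀ j : Fin v,
      t * (c j - (if v - m ≤ j.1 then 1 else 0)) ≤
        ω j * c j - (if v - m ≤ j.1 then ω j else 0) := by
    intro j
    by_cases h : v - m ≤ j.1
    · simp only [h, if_true]
      have h1 : ω j ≤ t := hω (Fin.le_def.mpr h)
      nlinarith [hc1 j]
    · simp only [h, if_false]
      have h1 : t ≤ ω j := hω (Fin.le_def.mpr (by simp only [Fin.val_mk]; omega))
      nlinarith [hc0 j]
  have hsum := Finset.sum_le_sum (fun j (_ : j ∈ Finset.univ) => hpt j)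
  have h1 : ∑ j : Fin v, (if v - m ≤ j.1 then ω j else 0)
      = ∑ j ∈ Finset.univ.filter (fun j : Fin v => v - m ≤ j.1), ω j := by
    rw [Finset.sum_filter]
  have h2 : ∑ j : Fin v, (if v - m ≤ j.1 then (1 : ℝ) else 0) = m := by
    rw [← Finset.sum_filter, Finset.sum_const, hcard, nsmul_eq_mul, mul_one]
  have e1 : ∑ j : Fin v, t * (c j - (if v - m ≤ j.1 then 1 else 0)) = 0 := by
    rw [← Finset.mul_sum, Finset.sum_sub_distrib, hcs, h2]; ring
  have e2 : ∑ j : Fin v, (ω j * c j - (if v - m ≤ j.1 then ω j else 0))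
      = (∑ j, ω j * c j) - ∑ j ∈ Finset.univ.filter (fun j : Fin v => v - m ≤ j.1), ω j := by
    rw [Finset.sum_sub_distrib, h1]
  rw [e1, e2] at hsum
  linarith

lemma expandsum {u : ℕ} (ε : ℕ → ℝ) (δ : Fin u → ℝ)
    (htel : ∀ i : Fin u, δ i = ∑ k ∈ Finset.Ico i.1 u, ε k) (w : Fin u → ℝ) :
    ∑ i, δ i * w i =
      ∑ k ∈ Finset.range u, ε k * ∑ i ∈ Finset.univ.filter (fun i : Fin u => i.1 ≤ k), w i := by
  calc ∑ i, δ i * w i = ∑ i : Fin u, ∑ k ∈ Finset.Ico i.1 u, ε k * w i := by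
        refine Finset.sum_congr rfl (fun i _ => ?_)
        rw [htel i, Finset.sum_mul]
    _ = ∑ i : Fin u, ∑ k ∈ Finset.range u, (if i.1 ≤ k then ε k * w i else 0) := by
        refine Finset.sum_congr rfl (fun i _ => ?_)
        rw [← Finset.sum_filter]
        congr 1
        ext k
        simp only [Finset.mem_Ico, Finset.mem_filter, Finset.mem_range]
        omega
    _ = ∑ k ∈ Finset.range u, ∑ i : Fin u, (if i.1 ≤ k then ε k * w i else 0) :=
        Finset.sum_comm
    _ = ∑ k ∈ Finset.range u, ε k *
          ∑ i ∈ Finset.univ.filter (fun i : Fin u => i.1 ≤ k), w i := by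
        refine Finset.sum_congr rfl (fun k _ => ?_)
        rw [Finset.mul_sum, Finset.sum_filter]

lemma real_main {u v : ℕ} (huv : u ≤ v)
    (δ : Fin u → ℝ) (hδm : Antitone δ) (hδ0 : ∀ i, 0 ≤ δ i)
    (ω : Fin v → ℝ) (hω : Antitone ω)
    (Q : Fin v → Fin u → ℝ) (hQ0 : ∀ j i, 0 ≤ Q j i)
    (hcol : ∀ i, ∑ j, Q j i = 1) (hrow : ∀ j, ∑ i, Q j i ≤ 1) :
    ∑ i : Fin u, δ i * ω ⟨v - 1 - i.1, Nat.lt_of_le_of_lt (Nat.sub_le _ _) (by have := i.isLt; omega)⟩ ≤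
      ∑ i : Fin u, δ i * ∑ j : Fin v, ω j * Q j i := by
  set g : ℕ → ℝ := fun k => if h : k < u then δ ⟨k, h⟩ else 0 with hg
  set ε : ℕ → ℝ := fun k => g k - g (k + 1) with hε
  have hε0 : ∀ k, 0 ≤ ε k := by
    intro k
    simp only [hε, hg, sub_nonneg]
    by_cases h2 : k < u
    · by_cases h1 : k + 1 < u
      · rw [dif_pos h1, dif_pos h2]
        exact hδm (Fin.mk_le_mk.mpr (by omega))
      · rw [dif_neg h1, dif_pos h2]
        exact hδ0 _
    · have h1 : ¬ k + 1 < u := by omega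
      rw [dif_neg h1, dif_neg h2]
  have htel : ∀ i : Fin u, δ i = ∑ k ∈ Finset.Ico i.1 u, ε k := by
    intro i
    rw [Finset.sum_Ico_eq_sum_range]
    have : ∀ j ∈ Finset.range (u - i.1),
        ε (i.1 + j) = (fun j => g (i.1 + j)) j - (fun j => g (i.1 + j)) (j + 1) := by
      intro j _
      simp only [hε]
      rw [Nat.add_assoc]
    rw [Finset.sum_congr rfl this, Finset.sum_range_sub']
    have h1 : i.1 + (u - i.1) = u := by omega
    have h2 : g u = 0 := by simp [hg]
    simp only [h1, h2, add_zero, sub_zero]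
    simp [hg, i.isLt]
  -- per-k inequality
  have hkey : ∀ k, k < u →
      ∑ i ∈ Finset.univ.filter (fun i : Fin u => i.1 ≤ k),
        ω ⟨v - 1 - i.1, by omega⟩ ≤
      ∑ i ∈ Finset.univ.filter (fun i : Fin u => i.1 ≤ k), ∑ j : Fin v, ω j * Q j i := by
    intro k hk
    have hu : 0 < u := by omega
    set c : Fin v → ℝ := fun j => ∑ i ∈ Finset.univ.filter (fun i : Fin u => i.1 ≤ k), Q j i
      with hc
    have hcardu : (Finset.univ.filter (fun i : Fin u => i.1 ≤ k)).card = k + 1 := by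
      have : Finset.univ.filter (fun i : Fin u => i.1 ≤ k) = Finset.Iic (⟨k, hk⟩ : Fin u) := by
        ext i; simp [Fin.le_def]
      rw [this, Fin.card_Iic]
    have hc0 : ∀ j, 0 ≤ c j := fun j => Finset.sum_nonneg (fun i _ => hQ0 j i)
    have hc1 : ∀ j, c j ≤ 1 := by
      intro j
      calc c j ≤ ∑ i : Fin u, Q j i :=
            Finset.sum_le_sum_of_subset_of_nonneg (Finset.filter_subset _ _)
              (fun i _ _ => hQ0 j i)
        _ ≤ 1 := hrow j
    have hcs : ∑ j, c j = ((k + 1 : ℕ) : ℝ) := by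
      rw [hc]
      rw [Finset.sum_comm]
      rw [Finset.sum_congr rfl (fun i _ => hcol i), Finset.sum_const, hcardu]
      simp
    have hks := keysum (k + 1) (by omega) (by omega) ω hω c hc0 hc1 hcs
    have hL : ∑ i ∈ Finset.univ.filter (fun i : Fin u => i.1 ≤ k),
        ω ⟨v - 1 - i.1, by omega⟩ =
        ∑ j ∈ Finset.univ.filter (fun j : Fin v => v - (k + 1) ≤ j.1), ω j := by
      refine Finset.sum_nbij' (fun i => (⟨v - 1 - i.1, by omega⟩ : Fin v))
        (fun j => (⟨min (v - 1 - j.1) (u - 1), by omega⟩ : Fin u)) ?_ ?_ ?_ ?_ ?_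
      · intro i hi
        simp only [Finset.mem_filter, Finset.mem_univ, true_and] at hi ⊢
        omega
      · intro j hj
        simp only [Finset.mem_filter, Finset.mem_univ, true_and] at hj ⊢
        omega
      · intro i hi
        simp only [Finset.mem_filter, Finset.mem_univ, true_and] at hi
        apply Fin.ext
        simp only [Fin.val_mk]
        omega
      · intro j hj
        simp only [Finset.mem_filter, Finset.mem_univ, true_and] at hj
        apply Fin.ext
        simp only [Fin.val_mk]
        omega
      · intro i hi
        rfl
    have hR : ∑ j : Fin v, ω j * c j =
        ∑ i ∈ Finset.univ.filter (fun i : Fin u => i.1 ≤ k), ∑ j : Fin v, ω j * Q j i := by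
      rw [hc]
      simp_rw [Finset.mul_sum]
      exact Finset.sum_comm
    rw [hL, ← hR]
    exact hks
  -- assemble via Abel summation
  have e1 := expandsum ε δ htel (fun i : Fin u => ω ⟨v - 1 - i.1, Nat.lt_of_le_of_lt (Nat.sub_le _ _) (by have := i.isLt; omega)⟩)
  have e2 := expandsum ε δ htel (fun i : Fin u => ∑ j : Fin v, ω j * Q j i)
  rw [e1, e2]
  refine Finset.sum_le_sum (fun k hk => ?_)
  exact mul_le_mul_of_nonneg_left (hkey k (Finset.mem_range.mp hk)) (hε0 k)


/-- For Δ = diag(δ₁,…,δ_u) with δ₁ ≥ … ≥ δ_u ≥ 0, Ω a v×v Hermitian matrix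
with eigenvalues ω₁ ≥ … ≥ ω_v, and any Θ with Θᴴ Θ = I_u,
tr(Δ Θᴴ Ω Θ) ≥ Σ_{i=1}^u δ_i ω_{v-i+1}. -/
theorem stmt0 {u v : ℕ} (huv : u ≤ v)
    (δ : Fin u → ℝ) (hδ_mono : Antitone δ) (hδ_nonneg : ∀ i, 0 ≤ δ i)
    (Ω : Matrix (Fin v) (Fin v) ℂ) (hΩ : Ω.IsHermitian)
    (ω : Fin v → ℝ) (hω_mono : Antitone ω)
    (hω_eig : ∃ σ : Equiv.Perm (Fin v), ω = hΩ.eigenvalues ∘ σ)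
    (Θ : Matrix (Fin v) (Fin u) ℂ) (hΘ : Θᴴ * Θ = 1) :
    ∑ i : Fin u, δ i * ω ⟨v - 1 - i.1, by have := i.isLt; omega⟩ ≤
      ((Matrix.diagonal (fun i => (δ i : ℂ)) * Θᴴ * Ω * Θ).trace).re := by
  obtain ⟨σ, hσ⟩ := hω_eig
  set U : Matrix (Fin v) (Fin v) ℂ := (hΩ.eigenvectorUnitary : Matrix (Fin v) (Fin v) ℂ) with hU
  set N : Matrix (Fin v) (Fin u) ℂ := Uᴴ * Θ with hNdef
  set e : Fin v → ℝ := hΩ.eigenvalues with he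
  have hUU : U * Uᴴ = 1 := by
    have := hΩ.eigenvectorUnitary.2
    rw [← Matrix.star_eq_conjTranspose]
    exact this.2
  have hN : Nᴴ * N = 1 := by
    rw [hNdef, conjTranspose_mul, conjTranspose_conjTranspose, Matrix.mul_assoc,
      ← Matrix.mul_assoc U, hUU, Matrix.one_mul, hΘ]
  have hspec : Ω = U * (Matrix.diagonal (fun j => (e j : ℂ))) * Uᴴ := by
    have := hΩ.spectral_theorem
    rw [Unitary.conjStarAlgAut_apply] at this
    rw [← Matrix.star_eq_conjTranspose]
    exact this
  have hsub : Θᴴ * Ω * Θ = Nᴴ * (Matrix.diagonal (fun j => (e j : ℂ))) * N := by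
    conv_lhs => rw [hspec]
    rw [hNdef, conjTranspose_mul, conjTranspose_conjTranspose]
    simp only [Matrix.mul_assoc]
  -- trace computation
  have hassoc : Matrix.diagonal (fun i => (δ i : ℂ)) * Θᴴ * Ω * Θ
      = Matrix.diagonal (fun i => (δ i : ℂ)) * (Θᴴ * Ω * Θ) := by
    simp only [Matrix.mul_assoc]
  have htr : (Matrix.diagonal (fun i => (δ i : ℂ)) * Θᴴ * Ω * Θ).trace
      = ((∑ i : Fin u, ∑ j : Fin v, δ i * (e j * Complex.normSq (N j i)) : ℝ) : ℂ) := by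
    rw [hassoc, hsub]
    rw [Matrix.trace]
    push_cast
    refine Finset.sum_congr rfl (fun i _ => ?_)
    rw [Matrix.diag_apply, Matrix.diagonal_mul, Matrix.mul_apply, Finset.mul_sum]
    refine Finset.sum_congr rfl (fun j _ => ?_)
    rw [Matrix.mul_diagonal, Matrix.conjTranspose_apply, Complex.star_def,
      mul_comm ((starRingEnd ℂ) (N j i)) ((e j : ℂ)), mul_assoc,
      ← Complex.normSq_eq_conj_mul_self]
  have hre : ((Matrix.diagonal (fun i => (δ i : ℂ)) * Θᴴ * Ω * Θ).trace).re
      = ∑ i : Fin u, ∑ j : Fin v, δ i * (e j * Complex.normSq (N j i)) := by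
    rw [htr, Complex.ofReal_re]
  -- column sums
  have hcolP : ∀ i : Fin u, ∑ j : Fin v, Complex.normSq (N j i) = 1 := by
    intro i
    have h1 : (Nᴴ * N) i i = 1 := by rw [hN, Matrix.one_apply_eq]
    rw [Matrix.mul_apply] at h1
    have h2 : ∑ j : Fin v, Nᴴ i j * N j i
        = ((∑ j : Fin v, Complex.normSq (N j i) : ℝ) : ℂ) := by
      push_cast
      refine Finset.sum_congr rfl (fun j _ => ?_)
      rw [Matrix.conjTranspose_apply]
      exact Complex.normSq_eq_conj_mul_self.symm
    rw [h2] at h1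
    exact_mod_cast h1
  -- row sums
  have hrowP : ∀ j : Fin v, ∑ i : Fin u, Complex.normSq (N j i) ≤ 1 := by
    intro j
    set G : Matrix (Fin v) (Fin v) ℂ := N * Nᴴ with hG
    have hGidem : G * G = G := by
      rw [hG, Matrix.mul_assoc, ← Matrix.mul_assoc Nᴴ N, hN, Matrix.one_mul]
    have hGH : Gᴴ = G := by
      rw [hG, conjTranspose_mul, conjTranspose_conjTranspose]
    set r : ℝ := ∑ i : Fin u, Complex.normSq (N j i) with hr
    have hr0 : 0 ≤ r := Finset.sum_nonneg (fun i _ => Complex.normSq_nonneg _)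
    have hGjj : G j j = (r : ℂ) := by
      rw [hG, Matrix.mul_apply, hr]
      push_cast
      refine Finset.sum_congr rfl (fun i _ => ?_)
      rw [Matrix.conjTranspose_apply, Complex.star_def]
      exact Complex.mul_conj _
    have hGsq : G j j = ((∑ k : Fin v, Complex.normSq (G j k) : ℝ) : ℂ) := by
      conv_lhs => rw [← hGidem]
      rw [Matrix.mul_apply]
      push_cast
      refine Finset.sum_congr rfl (fun k _ => ?_)
      have : G k j = (starRingEnd ℂ) (G j k) := by
        rw [← hGH, Matrix.conjTranspose_apply, hGH, Complex.star_def]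
      rw [this]
      exact Complex.mul_conj _
    have heq : r = ∑ k : Fin v, Complex.normSq (G j k) := by
      have := hGjj.symm.trans hGsq
      exact_mod_cast this
    have hsingle : Complex.normSq (G j j) ≤ ∑ k : Fin v, Complex.normSq (G j k) :=
      Finset.single_le_sum (fun k _ => Complex.normSq_nonneg _) (Finset.mem_univ j)
    rw [hGjj, Complex.normSq_ofReal] at hsingle
    nlinarith [heq, hsingle]
  rw [hre]
  have hmain := real_main huv δ hδ_mono hδ_nonneg ω hω_mono
    (fun j i => Complex.normSq (N (σ j) i))
    (fun j i => Complex.normSq_nonneg _)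
    (fun i => (Equiv.sum_comp σ (fun j => Complex.normSq (N j i))).trans (hcolP i))
    (fun j => hrowP (σ j))
  refine le_trans hmain (le_of_eq ?_)
  refine Finset.sum_congr rfl (fun i _ => ?_)
  have hinner : ∑ j : Fin v, ω j * Complex.normSq (N (σ j) i)
      = ∑ j : Fin v, e j * Complex.normSq (N j i) := by
    rw [hσ]
    exact Equiv.sum_comp σ (fun j => e j * Complex.normSq (N j i))
  rw [hinner, Finset.mul_sum]
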